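/- Let 𝐱=(x₁,x₂), 𝐲=(y₁,y₂), 𝐳=(z₁,z₂) be points of the bidisk with xᵢ≠yᵢ and yᵢ≠zᵢ for i=1,2, such that 𝐲 is between 𝐱 and 𝐳, and suppose E_k(𝐱,𝐲) intersects E_l(𝐲,𝐳) for some k, l ∈ ℝ. Then there exists m ∈ ℝ such that either S_m(x₁,y₁) ∩ S_m(y₁,z₁) ≠ ∅ or S_m(y₂,x₂) ∩ S_m(z₂,y₂) ≠ ∅. -/
import Mathlib


open UpperHalfPlane

noncomputable section

/-- `y` is between `x` and `z` in `ℍ`: every point on the equidistant line of `(x,y)`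
is strictly closer to `y` than to `z`, and every point on the equidistant line of
`(y,z)` is strictly closer to `y` than to `x` (the equidistant lines are disjoint and
`y` lies in the slab they bound). -/
def BtwH (x y z : UpperHalfPlane) : Prop :=
  (∀ w : UpperHalfPlane, dist w x = dist w y → dist w y < dist w z) ∧
  (∀ w : UpperHalfPlane, dist w y = dist w z → dist w y < dist w x)

private lemma cont_aux (a b c d : UpperHalfPlane) :
    Continuous (fun w : UpperHalfPlane =>
      (dist w a ^ 2 - dist w b ^ 2) - (dist w c ^ 2 - dist w d ^ 2)) := by
  have h : ∀ p : UpperHalfPlane, Continuous (fun w : UpperHalfPlane => dist w p ^ 2) :=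
    fun p => (continuous_id.dist continuous_const).pow 2
  exact ((h a).sub (h b)).sub ((h c).sub (h d))

/-- If `𝐲` is between `𝐱` and `𝐳` in the bidisk and `E_k(𝐱,𝐲)` intersects `E_l(𝐲,𝐳)`,
then for some `m ∈ ℝ` either `S_m(x₁,y₁) ∩ S_m(y₁,z₁) ≠ ∅` or
`S_m(y₂,x₂) ∩ S_m(z₂,y₂) ≠ ∅`. -/
theorem EK_intersect_imp_squareHyperbolae_intersect
    (x₁ x₂ y₁ y₂ z₁ z₂ : UpperHalfPlane)
    (hxy₁ : x₁ ≠ y₁) (hxy₂ : x₂ ≠ y₂) (hyz₁ : y₁ ≠ z₁) (hyz₂ : y₂ ≠ z₂)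
    (hbtw₁ : BtwH x₁ y₁ z₁) (hbtw₂ : BtwH x₂ y₂ z₂)
    (k l : ℝ)
    (hmeet : ∃ p₁ p₂ : UpperHalfPlane,
        (dist p₁ x₁ ^ 2 - dist p₁ y₁ ^ 2 = k ∧ dist p₂ y₂ ^ 2 - dist p₂ x₂ ^ 2 = k) ∧
        (dist p₁ y₁ ^ 2 - dist p₁ z₁ ^ 2 = l ∧ dist p₂ z₂ ^ 2 - dist p₂ y₂ ^ 2 = l)) :
    ∃ m : ℝ,
      (∃ w : UpperHalfPlane,
          dist w x₁ ^ 2 - dist w y₁ ^ 2 = m ∧ dist w y₁ ^ 2 - dist w z₁ ^ 2 = m) ∨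
      (∃ w : UpperHalfPlane,
          dist w y₂ ^ 2 - dist w x₂ ^ 2 = m ∧ dist w z₂ ^ 2 - dist w y₂ ^ 2 = m) := by
  obtain ⟨p₁, p₂, ⟨hk₁, hk₂⟩, hl₁, hl₂⟩ := hmeet
  set F : UpperHalfPlane → ℝ := fun w =>
    (dist w x₁ ^ 2 - dist w y₁ ^ 2) - (dist w y₁ ^ 2 - dist w z₁ ^ 2) with hF
  set G : UpperHalfPlane → ℝ := fun w =>
    (dist w y₂ ^ 2 - dist w x₂ ^ 2) - (dist w z₂ ^ 2 - dist w y₂ ^ 2) with hG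
  have hFp : F p₁ = k - l := by simp [hF, hk₁, hl₁]
  have hGp : G p₂ = k - l := by simp [hG, hk₂, hl₂]
  have hdy₁ : 0 < dist y₁ x₁ := dist_pos.2 (Ne.symm hxy₁)
  have hdy₁' : 0 < dist y₁ z₁ := dist_pos.2 hyz₁
  have hdy₂ : 0 < dist y₂ x₂ := dist_pos.2 (Ne.symm hxy₂)
  have hdy₂' : 0 < dist y₂ z₂ := dist_pos.2 hyz₂
  have hFy : 0 < F y₁ := by
    simp only [hF, dist_self]
    nlinarith [hdy₁, hdy₁']
  have hGy : G y₂ < 0 := by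
    simp only [hG, dist_self]
    nlinarith [hdy₂, hdy₂']
  rcases le_or_gt (k - l) 0 with hkl | hkl
  · -- IVT on first coordinate: F p₁ ≤ 0 < F y₁
    have h0 : (0 : ℝ) ∈ Set.Icc (F p₁) (F y₁) := ⟨by linarith [hFp ▸ hkl], le_of_lt hFy⟩
    obtain ⟨w, hw⟩ := intermediate_value_univ p₁ y₁ (cont_aux x₁ y₁ y₁ z₁) h0
    refine ⟨dist w x₁ ^ 2 - dist w y₁ ^ 2, Or.inl ⟨w, rfl, ?_⟩⟩
    have : F w = 0 := hw
    simp only [hF] at this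
    linarith
  · -- IVT on second coordinate: G y₂ < 0 < G p₂
    have h0 : (0 : ℝ) ∈ Set.Icc (G y₂) (G p₂) := ⟨le_of_lt hGy, by rw [hGp]; linarith⟩
    obtain ⟨w, hw⟩ := intermediate_value_univ y₂ p₂ (cont_aux y₂ x₂ z₂ y₂) h0
    refine ⟨dist w y₂ ^ 2 - dist w x₂ ^ 2, Or.inr ⟨w, rfl, ?_⟩⟩
    have : G w = 0 := hw
    simp only [hG] at this
    linarith
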